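/- Let R be a discrete valuation domain with maximal ideal generated by π and field of fractions Q, let A be a finite-dimensional semisimple Q-algebra and let Λ be an R-order in A. Then every R-torsionfree Λ-module N decomposes as a direct sum of Λ-submodules N = N' ⊕ N'', where N'' = ⋂_{n≥0} N·π^n is R-divisible (N''·r = N'' for every nonzero r ∈ R) and N' is R-reduced, i.e. ⋂_{n≥0} N'·π^n = 0. -/

import Mathlib

open scoped TensorProduct

universe u v w

/-- A module `M` over `Λ` is pure injective (equivalently, algebraically compact) if every
system of linear equations with coefficients in `Λ` (almost all zero in each equation) and
parameters in `M`, each of whose finite subsystems has a solution in `M`, has a solution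
in `M`. -/
def PureInjective (Λ : Type u) [Ring Λ] (M : Type v) [AddCommGroup M] [Module Λ M] : Prop :=
  ∀ (ι κ : Type w) (a : ι → κ →₀ Λ) (b : ι → M),
    (∀ s : Finset ι, ∃ x : κ → M, ∀ i ∈ s, ((a i).sum fun j c => c • x j) = b i) →
    ∃ x : κ → M, ∀ i, ((a i).sum fun j c => c • x j) = b i

/-- A module is indecomposable if it is nonzero and is not the internal direct sum of two
nonzero submodules. -/
def IsIndecomposable (Λ : Type u) [Ring Λ] (M : Type v) [AddCommGroup M] [Module Λ M] : Prop :=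
  (∃ m : M, m ≠ 0) ∧ ¬∃ U W : Submodule Λ M, U ≠ ⊥ ∧ W ≠ ⊥ ∧ IsCompl U W

/-- A module `M` over an `R`-algebra `Λ` is `R`-torsionfree if nonzero elements of `R` act on
nonzero elements of `M` without producing `0`. -/
def RTorsionFree (R : Type w) [CommRing R] (Λ : Type u) [Ring Λ] [Algebra R Λ]
    (M : Type v) [AddCommGroup M] [Module Λ M] : Prop :=
  ∀ (m : M) (r : R), m ≠ 0 → r ≠ 0 → algebraMap R Λ r • m ≠ 0

/-- The submodule `M·r` of all multiples of a central scalar `r : R` in `M`. -/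
def smulRange (R : Type w) [CommRing R] (Λ : Type u) [Ring Λ] [Algebra R Λ]
    (M : Type v) [AddCommGroup M] [Module Λ M] (r : R) : Submodule Λ M where
  carrier := Set.range fun m : M => algebraMap R Λ r • m
  add_mem' := by
    rintro _ _ ⟨a, rfl⟩ ⟨b, rfl⟩
    exact ⟨a + b, by dsimp only; rw [smul_add]⟩
  zero_mem' := ⟨0, by dsimp only; rw [smul_zero]⟩
  smul_mem' := by
    rintro c _ ⟨a, rfl⟩
    exact ⟨c • a, by dsimp only; rw [smul_smul, smul_smul, Algebra.commutes]⟩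

/-- The additive subgroup `M·I` of finite sums of elements `ρ s • m` with `s ∈ I`, `m ∈ M`. -/
def idealSmul {R : Type w} [CommRing R] {Λ : Type u} [Ring Λ] (ρ : R →+* Λ) (I : Ideal R)
    (M : Type v) [AddCommGroup M] [Module Λ M] : AddSubgroup M :=
  AddSubgroup.closure {x | ∃ s ∈ I, ∃ m : M, x = ρ s • m}

/-- `Λ` is an `R`-order in the finite-dimensional `Q`-algebra `A`, realized via the embedding
`i : Λ →ₐ[R] A`: this says that `Λ` is (isomorphic to) a subring of `A` whose centre contains
`R` (the `R`-algebra structure), which is finitely generated as an `R`-module, and such that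
`Q·Λ = A`. -/
structure IsOrderIn (R : Type*) [CommRing R] (Q : Type*) [Field Q] [Algebra R Q]
    (A : Type*) [Ring A] [Algebra Q A] [Algebra R A] [IsScalarTower R Q A]
    (Λ : Type*) [Ring Λ] [Algebra R Λ] (i : Λ →ₐ[R] A) : Prop where
  fin : Module.Finite R Λ
  inj : Function.Injective i
  span : Submodule.span Q (Set.range i) = ⊤

/-- A `Λ`-lattice: a finitely generated `R`-torsionfree `Λ`-module. -/
def IsLatticeModule (R : Type w) [CommRing R] (Λ : Type u) [Ring Λ] [Algebra R Λ]
    (M : Type v) [AddCommGroup M] [Module Λ M] : Prop :=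
  Module.Finite Λ M ∧ RTorsionFree R Λ M

/-- The solution set in the (right) module `M` of the system of linear equations (pp-formula in
one free variable) determined by the `(1+l) × n` matrix `T`:
`sol_T(M) = {m | ∃ y, (m,y)·T = 0}`. -/
def solSet {Λ : Type u} [Ring Λ] {l n : ℕ} (T : Matrix (Fin (l + 1)) (Fin n) Λ)
    (M : Type v) [AddCommGroup M] [Module Λ M] : Set M :=
  {m | ∃ y : Fin l → M, ∀ j : Fin n, T 0 j • m + ∑ k : Fin l, T k.succ j • y k = 0}

/-- `T ≤ T'` : the solution set of `T` is contained in that of `T'` in every `R`-torsionfree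
`Λ`-module. -/
def MatLE (R : Type*) [CommRing R] (Λ : Type u) [Ring Λ] [Algebra R Λ]
    {l n l' n' : ℕ} (T : Matrix (Fin (l + 1)) (Fin n) Λ)
    (T' : Matrix (Fin (l' + 1)) (Fin n') Λ) : Prop :=
  ∀ (M : Type v) [AddCommGroup M] [Module Λ M], RTorsionFree R Λ M → solSet T M ⊆ solSet T' M

/-- `T ∈ D` : in every `R`-torsionfree `Λ`-module `M`, the solution set of `T` contains `M·p`. -/
def MatD (R : Type*) [CommRing R] (Λ : Type u) [Ring Λ] [Algebra R Λ] (p : R)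
    {l n : ℕ} (T : Matrix (Fin (l + 1)) (Fin n) Λ) : Prop :=
  ∀ (M : Type v) [AddCommGroup M] [Module Λ M], RTorsionFree R Λ M →
    ∀ m : M, algebraMap R Λ p • m ∈ solSet T M

/-- `sol*_T(N)` relative to `r` : those `m ∈ N` for which there is `y` with all the entries of
the row vector `(m,y)·T` lying in `N·r`. -/
def solModSet {R : Type*} [CommRing R] {Λ : Type u} [Ring Λ] [Algebra R Λ]
    {l n : ℕ} (T : Matrix (Fin (l + 1)) (Fin n) Λ)
    (N : Type v) [AddCommGroup N] [Module Λ N] (r : R) : Set N :=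
  {m | ∃ y : Fin l → N, ∀ j : Fin n, ∃ x : N,
    T 0 j • m + ∑ k : Fin l, T k.succ j • y k = algebraMap R Λ r • x}

/-- `R'` is (up to isomorphism) the `π`-adic completion of `R`: it is `π`-adically separated
and complete, `R` is dense in it, and `R → R'` induces isomorphisms `R/π^k ≅ R'/π^k R'`. -/
structure IsPiAdicCompletion (R : Type*) [CommRing R] (π : R)
    (R' : Type*) [CommRing R'] [Algebra R R'] : Prop where
  haus : ∀ x : R', (∀ k : ℕ, ∃ y : R', x = algebraMap R R' (π ^ k) * y) → x = 0
  complete : ∀ f : ℕ → R',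
    (∀ m k : ℕ, m ≤ k → ∃ y : R', f k - f m = algebraMap R R' (π ^ m) * y) →
    ∃ x : R', ∀ k : ℕ, ∃ y : R', x - f k = algebraMap R R' (π ^ k) * y
  dense : ∀ (x : R') (k : ℕ), ∃ (r : R) (y : R'),
    x - algebraMap R R' r = algebraMap R R' (π ^ k) * y
  inj : ∀ (r : R) (k : ℕ),
    (∃ y : R', algebraMap R R' r = algebraMap R R' (π ^ k) * y) → ∃ c : R, r = π ^ k * c

theorem auxSplit
    (R : Type u) [CommRing R] [IsDomain R]
    (Q : Type u) [Field Q] [Algebra R Q] [IsFractionRing R Q]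
    (A : Type u) [Ring A] [Algebra Q A] [Algebra R A] [IsScalarTower R Q A]
    [IsSemisimpleRing A]
    (Λ : Type u) [Ring Λ] [Algebra R Λ] (i : Λ →ₐ[R] A)
    (hinj : Function.Injective i) (hspan : Submodule.span Q (Set.range i) = ⊤)
    (N : Type v) [AddCommGroup N] [Module Λ N] [Module R N] [IsScalarTower R Λ N]
    (htf : ∀ (m : N) (r : R), m ≠ 0 → r ≠ 0 → r • m ≠ 0)
    (N'' : Submodule Λ N)
    (hdiv : ∀ (r : R), r ≠ 0 → ∀ x ∈ N'', ∃ z ∈ N'', r • z = x) :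
    ∃ F : N →ₗ[Λ] N, (∀ n : N, F n ∈ N'') ∧ (∀ x ∈ N'', F x = x) := by
  classical
  haveI : SMulCommClass R Λ N :=
    ⟨fun r a n => by
      rw [← algebraMap_smul Λ r n, ← algebraMap_smul Λ r (a • n), smul_smul, smul_smul,
        Algebra.commutes]⟩
  haveI : SMulCommClass Λ R N := SMulCommClass.symm _ _ _
  -- the representation of Λ on Q ⊗[R] N
  set ρ : Λ →ₐ[R] Module.End Q (Q ⊗[R] N) :=
    (Module.End.baseChangeHom R Q N).comp (Algebra.lsmul R R N : Λ →ₐ[R] Module.End R N) with hρ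
  letI : Module Λ (Q ⊗[R] N) := Module.compHom _ ρ.toRingHom
  have hsmul : ∀ (a : Λ) (m : Q ⊗[R] N), a • m = ρ a m := fun _ _ => rfl
  have htmul : ∀ (a : Λ) (q : Q) (n : N), a • (q ⊗ₜ[R] n) = q ⊗ₜ[R] (a • n) := by
    intro a q n
    rw [hsmul]
    show (((Algebra.lsmul R R N : Λ →ₐ[R] Module.End R N) a).baseChange Q) (q ⊗ₜ[R] n) = _
    rw [LinearMap.baseChange_tmul]
    rfl
  haveI : SMulCommClass Q Λ (Q ⊗[R] N) :=
    ⟨fun q a m => ((ρ a).map_smul q m).symm⟩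
  haveI : IsScalarTower R Λ (Q ⊗[R] N) := IsScalarTower.of_algebraMap_smul (by
    intro r m
    induction m using TensorProduct.induction_on with
    | zero => simp
    | tmul q n => rw [htmul, algebraMap_smul, ← TensorProduct.smul_tmul, TensorProduct.smul_tmul']
    | add x y hx hy => rw [smul_add, smul_add, hx, hy])
  letI : Module (Q ⊗[R] Λ) (Q ⊗[R] N) := TensorProduct.Algebra.module
  have hSsmul : ∀ (q : Q) (a : Λ) (m : Q ⊗[R] N), (q ⊗ₜ[R] a) • m = q • (a • m) :=
    fun _ _ _ => rfl
  -- the algebra map φ : Q ⊗[R] Λ → A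
  set φ : (Q ⊗[R] Λ) →ₐ[Q] A :=
    Algebra.TensorProduct.lift (Algebra.ofId Q A) i
      (fun q b => Algebra.commutes q (i b)) with hφdef
  have hφ : ∀ (q : Q) (a : Λ), φ (q ⊗ₜ[R] a) = algebraMap Q A q * i a := by
    intro q a
    exact Algebra.TensorProduct.lift_tmul _ _ _ q a
  have hφsurj : Function.Surjective φ := by
    intro a
    have ha : a ∈ Submodule.span Q (Set.range i) := by rw [hspan]; trivial
    induction ha using Submodule.span_induction with
    | mem x h =>
      obtain ⟨b, rfl⟩ := h
      exact ⟨(1 : Q) ⊗ₜ[R] b, by rw [hφ, map_one, one_mul]⟩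
    | zero => exact ⟨0, map_zero _⟩
    | add x y hx hy hx' hy' =>
      obtain ⟨s, rfl⟩ := hx'; obtain ⟨t, rfl⟩ := hy'
      exact ⟨s + t, map_add _ _ _⟩
    | smul q x hx hx' =>
      obtain ⟨s, rfl⟩ := hx'
      exact ⟨q • s, map_smul φ q s⟩
  -- clearing denominators in Q ⊗[R] Λ
  have hclear : ∀ t : Q ⊗[R] Λ, ∃ (d : R) (b : Λ), d ≠ 0 ∧ d • t = (1 : Q) ⊗ₜ[R] b := by
    intro t
    induction t using TensorProduct.induction_on with
    | zero => exact ⟨1, 0, one_ne_zero, by simp⟩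
    | tmul q a =>
      obtain ⟨⟨r, s⟩, hq⟩ := IsLocalization.mk'_surjective (nonZeroDivisors R) q
      dsimp only at hq
      refine ⟨(s : R), r • a, nonZeroDivisors.coe_ne_zero s, ?_⟩
      rw [TensorProduct.smul_tmul', ← TensorProduct.smul_tmul]
      congr 1
      rw [Algebra.smul_def, ← hq, IsLocalization.mk'_spec', Algebra.algebraMap_eq_smul_one]
    | add x y hx hy =>
      obtain ⟨d₁, b₁, hd₁, h₁⟩ := hx
      obtain ⟨d₂, b₂, hd₂, h₂⟩ := hy
      refine ⟨d₁ * d₂, d₂ • b₁ + d₁ • b₂, mul_ne_zero hd₁ hd₂, ?_⟩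
      rw [smul_add]
      rw [show (d₁ * d₂) • x = d₂ • (d₁ • x) by rw [smul_smul, mul_comm],
        show (d₁ * d₂) • y = d₁ • (d₂ • y) by rw [smul_smul], h₁, h₂,
        ← TensorProduct.tmul_smul, ← TensorProduct.tmul_smul, ← TensorProduct.tmul_add]
  have hφinj : Function.Injective φ := by
    rw [injective_iff_map_eq_zero]
    intro t ht
    obtain ⟨d, b, hd, hdt⟩ := hclear t
    have hb : i b = 0 := by
      have h1 : φ ((1 : Q) ⊗ₜ[R] b) = 0 := by
        rw [← hdt, ← algebraMap_smul Q d t, map_smul, ht, smul_zero]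
      rwa [hφ, map_one, one_mul] at h1
    have hb0 : b = 0 := hinj (by rw [hb, map_zero])
    rw [hb0, TensorProduct.tmul_zero] at hdt
    have hda : algebraMap R Q d ≠ 0 := fun h =>
      hd (IsFractionRing.injective R Q (by rw [h, map_zero]))
    have h2 : algebraMap R Q d • t = 0 := by rw [algebraMap_smul, hdt]
    calc t = (algebraMap R Q d)⁻¹ • (algebraMap R Q d • t) := (inv_smul_smul₀ hda t).symm
    _ = 0 := by rw [h2, smul_zero]
  haveI : IsSemisimpleRing (Q ⊗[R] Λ) :=
    ((AlgEquiv.ofBijective φ ⟨hφinj, hφsurj⟩).symm.toRingEquiv).isSemisimpleRing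
  -- the canonical map j : N → Q ⊗[R] N
  set j : N →ₗ[R] Q ⊗[R] N := TensorProduct.mk R Q N 1 with hjdef
  have hj : ∀ n : N, j n = (1 : Q) ⊗ₜ[R] n := fun n => rfl
  haveI : IsLocalizedModule (nonZeroDivisors R) j :=
    (isLocalizedModule_iff_isBaseChange (nonZeroDivisors R) Q j).mpr
      (TensorProduct.isBaseChange R N Q)
  have hjinj : Function.Injective j := by
    intro x y hxy
    have h0 : j (x - y) = 0 := by rw [map_sub, hxy, sub_self]
    obtain ⟨s, hs⟩ := (IsLocalizedModule.eq_zero_iff (nonZeroDivisors R) j).mp h0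
    by_contra hne
    exact htf (x - y) (s : R) (sub_ne_zero.mpr hne) (nonZeroDivisors.coe_ne_zero s) hs
  have hjΛ : ∀ (a : Λ) (n : N), j (a • n) = a • j n := by
    intro a n; rw [hj, hj, htmul]
  -- q • j n stays in j '' N'' for n ∈ N''
  have hqmem : ∀ (q : Q), ∀ n ∈ N'', q • j n ∈ j '' N'' := by
    intro q n hn
    obtain ⟨⟨r, s⟩, hq⟩ := IsLocalization.mk'_surjective (nonZeroDivisors R) q
    dsimp only at hq
    obtain ⟨z, hz, hzn⟩ := hdiv (s : R) (nonZeroDivisors.coe_ne_zero s) n hn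
    refine ⟨r • z, ?_, ?_⟩
    · show r • z ∈ N''
      rw [← algebraMap_smul Λ r z]; exact N''.smul_mem _ hz
    rw [map_smul, ← hzn, map_smul, ← algebraMap_smul Q (s : R) (j z), smul_smul, ← hq,
      IsLocalization.mk'_spec, algebraMap_smul]
  -- the submodule W = j '' N'' of Q ⊗[R] N over Q ⊗[R] Λ
  set W : Submodule (Q ⊗[R] Λ) (Q ⊗[R] N) :=
    { carrier := j '' N''
      add_mem' := by
        rintro _ _ ⟨a, ha, rfl⟩ ⟨b, hb, rfl⟩
        exact ⟨a + b, N''.add_mem ha hb, map_add j a b⟩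
      zero_mem' := ⟨0, N''.zero_mem, map_zero j⟩
      smul_mem' := by
        intro c m hm
        induction c using TensorProduct.induction_on with
        | zero =>
          rw [zero_smul]; exact ⟨0, N''.zero_mem, map_zero j⟩
        | tmul q a =>
          obtain ⟨n, hn, rfl⟩ := hm
          rw [hSsmul, ← hjΛ]
          exact hqmem q (a • n) (N''.smul_mem a hn)
        | add c₁ c₂ h₁ h₂ =>
          rw [add_smul]
          obtain ⟨n₁, hn₁, he₁⟩ := h₁
          obtain ⟨n₂, hn₂, he₂⟩ := h₂
          exact ⟨n₁ + n₂, N''.add_mem hn₁ hn₂, by rw [map_add, he₁, he₂]⟩ } with hWdef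
  have hWmem : ∀ m : Q ⊗[R] N, m ∈ W ↔ m ∈ j '' N'' := fun m => Iff.rfl
  -- a complement for W via semisimplicity
  obtain ⟨W', hW'⟩ := exists_isCompl W
  set pr : (Q ⊗[R] N) →ₗ[Q ⊗[R] Λ] W := Submodule.projectionOnto W W' hW' with hprdef
  have hpr : ∀ (w : Q ⊗[R] N) (hw : w ∈ W), (pr w : Q ⊗[R] N) = w := by
    intro w hw
    rw [hprdef, Submodule.projectionOnto_apply_left hW' ⟨w, hw⟩]
  -- the function f : N → N
  have hex : ∀ n : N, ∃ x ∈ N'', j x = (pr (j n) : Q ⊗[R] N) := fun n => (pr (j n)).2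
  choose f hfmem hfj using hex
  have hf_eqj : ∀ n : N, j (f n) = (pr (j n) : Q ⊗[R] N) := hfj
  have hconst : ∀ x ∈ N'', f x = x := by
    intro x hx
    apply hjinj
    rw [hf_eqj, hpr (j x) ⟨x, hx, rfl⟩]
  have hadd : ∀ x y : N, f (x + y) = f x + f y := by
    intro x y
    apply hjinj
    rw [map_add, hf_eqj, hf_eqj, hf_eqj, map_add, map_add, Submodule.coe_add]
  have hsmulΛ : ∀ (a : Λ) (n : N), f (a • n) = a • f n := by
    intro a n
    apply hjinj
    have h1 : a • j n = ((1 : Q) ⊗ₜ[R] a) • j n := by rw [hSsmul, one_smul]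
    rw [hf_eqj, hjΛ, hjΛ, hf_eqj, h1, map_smul, Submodule.coe_smul, hSsmul, one_smul]
  refine ⟨{ toFun := f, map_add' := hadd, map_smul' := hsmulΛ }, fun n => hfmem n, hconst⟩


/-- over an order in a finite-dimensional semisimple algebra over the fraction
field of a discrete valuation domain `R` with maximal ideal `(π)`, every `R`-torsionfree
module `N` decomposes as `N = N' ⊕ N''` where `N'' = ⋂ₙ N·πⁿ` is `R`-divisible and `N'` is
`R`-reduced. -/
theorem statement_7
    (R : Type u) [CommRing R] [IsDomain R] [IsDiscreteValuationRing R]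
    (π : R) (hπ : IsLocalRing.maximalIdeal R = Ideal.span {π})
    (Q : Type u) [Field Q] [Algebra R Q] [IsFractionRing R Q]
    (A : Type u) [Ring A] [Algebra Q A] [Algebra R A] [IsScalarTower R Q A]
    [FiniteDimensional Q A] [IsSemisimpleRing A]
    (Λ : Type u) [Ring Λ] [Algebra R Λ] (i : Λ →ₐ[R] A) (hΛ : IsOrderIn R Q A Λ i)
    (N : Type v) [AddCommGroup N] [Module Λ N] (htf : RTorsionFree R Λ N) :
    ∃ N' : Submodule Λ N,
      IsCompl N' (⨅ k : ℕ, smulRange R Λ N (π ^ k)) ∧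
      (∀ r : R, r ≠ 0 → smulRange R Λ (↥(⨅ k : ℕ, smulRange R Λ N (π ^ k))) r = ⊤) ∧
      (⨅ k : ℕ, smulRange R Λ (↥N') (π ^ k)) = ⊥ := by
  classical
  have hπ0 : π ≠ 0 := by
    intro h
    exact IsDiscreteValuationRing.not_a_field R
      (by rw [hπ, h, Ideal.span_singleton_eq_bot.mpr rfl])
  have hirr : Irreducible π :=
    IsDiscreteValuationRing.irreducible_of_span_eq_maximalIdeal π hπ0 hπ
  set N'' := ⨅ k : ℕ, smulRange R Λ N (π ^ k) with hN''def
  have hmem : ∀ x : N, x ∈ N'' ↔ ∀ k : ℕ, ∃ y : N, algebraMap R Λ (π ^ k) • y = x := by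
    intro x
    rw [hN''def, Submodule.mem_iInf]
    exact ⟨fun h k => h k, fun h k => h k⟩
  have hcan : ∀ (r : R), r ≠ 0 → ∀ x y : N,
      algebraMap R Λ r • x = algebraMap R Λ r • y → x = y := by
    intro r hr x y h
    by_contra hxy
    exact htf (x - y) r (sub_ne_zero.mpr hxy) hr (by rw [smul_sub, h, sub_self])
  have hdivπ : ∀ (k : ℕ), ∀ x ∈ N'', ∃ z ∈ N'', algebraMap R Λ (π ^ k) • z = x := by
    intro k x hx
    have hx' := (hmem x).mp hx
    choose w hw using hx'
    refine ⟨w k, ?_, hw k⟩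
    rw [hmem]
    intro m
    refine ⟨w (k + m), ?_⟩
    apply hcan (π ^ k) (pow_ne_zero k hπ0)
    rw [smul_smul, ← map_mul, ← pow_add, hw (k + m), hw k]
  have hdiv : ∀ (r : R), r ≠ 0 → ∀ x ∈ N'', ∃ z ∈ N'', algebraMap R Λ r • z = x := by
    intro r hr x hx
    obtain ⟨n, u, hru⟩ := IsDiscreteValuationRing.eq_unit_mul_pow_irreducible hr hirr
    obtain ⟨z₀, hz₀, hz₀x⟩ := hdivπ n x hx
    refine ⟨algebraMap R Λ ((u⁻¹ : Rˣ) : R) • z₀, N''.smul_mem _ hz₀, ?_⟩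
    rw [smul_smul, ← map_mul, hru]
    have hcalc : ((u : R) * π ^ n) * ((u⁻¹ : Rˣ) : R) = π ^ n := by
      rw [mul_comm (u : R) (π ^ n), mul_assoc, Units.mul_inv, mul_one]
    rw [hcalc, hz₀x]
  -- the complement via auxSplit
  letI instRN : Module R N := Module.compHom N (algebraMap R Λ : R →+* Λ)
  haveI : IsScalarTower R Λ N :=
    ⟨fun r a n => by
      show (r • a) • n = algebraMap R Λ r • (a • n)
      rw [Algebra.smul_def, mul_smul]⟩
  have htf' : ∀ (m : N) (r : R), m ≠ 0 → r ≠ 0 → r • m ≠ 0 := by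
    intro m r hm hr
    rw [← algebraMap_smul Λ r m]
    exact htf m r hm hr
  have hdiv' : ∀ (r : R), r ≠ 0 → ∀ x ∈ N'', ∃ z ∈ N'', r • z = x := by
    intro r hr x hx
    obtain ⟨z, hz, hzx⟩ := hdiv r hr x hx
    exact ⟨z, hz, by rw [← algebraMap_smul Λ r z] at *; exact hzx⟩
  obtain ⟨F, hFmem, hFid⟩ := auxSplit R Q A Λ i hΛ.inj hΛ.span N htf' N'' hdiv'
  refine ⟨LinearMap.ker F, ⟨?_, ?_⟩, ?_, ?_⟩
  · refine Submodule.disjoint_def.mpr fun x hx hx'' => ?_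
    exact ((hFid x hx'').symm.trans (LinearMap.mem_ker.mp hx))
  · rw [codisjoint_iff, eq_top_iff]
    intro n _
    have h1 : n - F n ∈ LinearMap.ker F := by
      rw [LinearMap.mem_ker, map_sub, hFid (F n) (hFmem n), sub_self]
    exact Submodule.mem_sup.mpr ⟨n - F n, h1, F n, hFmem n, by abel⟩
  · intro r hr
    rw [eq_top_iff]
    intro z _
    obtain ⟨x, hx⟩ := z
    obtain ⟨w, hw, hwx⟩ := hdiv r hr x hx
    exact ⟨⟨w, hw⟩, Subtype.ext hwx⟩
  · rw [eq_bot_iff]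
    intro z hz
    have hz1 : (z : N) ∈ N'' := by
      rw [hmem]
      intro k
      obtain ⟨y, hy⟩ := (Submodule.mem_iInf _).mp hz k
      exact ⟨(y : N), by rw [← hy]; rfl⟩
    have hz0 : (z : N) = 0 := (hFid (z : N) hz1).symm.trans (LinearMap.mem_ker.mp z.2)
    exact (Submodule.mem_bot _).mpr (Subtype.ext hz0)
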